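/- arXiv:1903.10248 — 2 statements merged into one kernel-verified Lean document; each statement's English description precedes it below -/
import Mathlib

section
/- Let A_1 be the first Weyl algebra and σ_0 the automorphism of A_1 determined by σ_0(∂) = -x and σ_0(x) = ∂. For λ ∈ ℂ \ ℤ, the twist of the module U(λ) by σ_0 (i.e. the module with same underlying space and action a·v := σ_0(a)v) is isomorphic to U(-λ). -/
/-- The operator `x`: `x · e_n = e_{n+1}` on `U(λ)`, basis `e_n ↔ x^{λ+n}`. -/
noncomputable def weylX : (ℤ →₀ ℂ) →ₗ[ℂ] (ℤ →₀ ℂ) :=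
  Finsupp.lmapDomain ℂ ℂ (fun n => n + 1)

/-- The operator `∂`: `∂ · e_n = (λ + n) e_{n-1}`. -/
noncomputable def weylD (l : ℂ) : (ℤ →₀ ℂ) →ₗ[ℂ] (ℤ →₀ ℂ) :=
  Finsupp.lsum ℂ (fun n => (l + (n : ℂ)) • Finsupp.lsingle (n - 1))

noncomputable def cfun (l : ℂ) : ℤ → ℂ := fun n =>
  if 0 ≤ n then ∏ k ∈ Finset.range n.toNat, (l + k + 1)
  else (∏ k ∈ Finset.range (-n).toNat, (l - k))⁻¹

lemma factor_ne (l : ℂ) (h : ∀ n : ℤ, l ≠ (n : ℂ)) (m : ℤ) : l + (m : ℂ) ≠ 0 := by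
  intro hz
  exact h (-m) (by push_cast; linear_combination hz)

lemma natcast_toNat {n : ℤ} (hn : 0 ≤ n) : ((n.toNat : ℕ) : ℂ) = (n : ℂ) := by
  have : ((n.toNat : ℤ)) = n := Int.toNat_of_nonneg hn
  exact_mod_cast congrArg (fun z : ℤ => (z : ℂ)) this

lemma cfun_ne_zero (l : ℂ) (h : ∀ n : ℤ, l ≠ (n : ℂ)) (n : ℤ) : cfun l n ≠ 0 := by
  unfold cfun
  split
  · refine Finset.prod_ne_zero_iff.2 fun k _ => fun hz => factor_ne l h (k + 1) ?_
    push_cast; linear_combination hz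
  · refine inv_ne_zero (Finset.prod_ne_zero_iff.2 fun k _ => fun hz => factor_ne l h (-k) ?_)
    push_cast; linear_combination hz

lemma cfun_succ (l : ℂ) (h : ∀ n : ℤ, l ≠ (n : ℂ)) (n : ℤ) :
    cfun l (n + 1) = (l + n + 1) * cfun l n := by
  have hfac : l + (n : ℂ) + 1 ≠ 0 := by
    intro hz; exact factor_ne l h (n + 1) (by push_cast; linear_combination hz)
  unfold cfun
  rcases lt_trichotomy n (-1) with hn | hn | hn
  · rw [if_neg (by omega), if_neg (by omega)]
    have ht : (-n).toNat = (-(n+1)).toNat + 1 := by omega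
    rw [ht, Finset.prod_range_succ, natcast_toNat (by omega : (0:ℤ) ≤ -(n+1))]
    push_cast
    rw [show l - -(↑n + 1) = l + n + 1 by ring, mul_inv]
    field_simp
  · subst hn
    rw [if_pos (by norm_num), if_neg (by norm_num)]
    rw [show ((-1:ℤ) + 1).toNat = 0 from rfl, show ((-(-1:ℤ)).toNat) = 1 from rfl]
    rw [Finset.prod_range_zero, Finset.prod_range_one]
    push_cast
    rw [show l - 0 = l by ring, show l + -1 + 1 = l by ring]
    rw [mul_inv_cancel₀ (by simpa using factor_ne l h 0)]
  · rw [if_pos (by omega), if_pos (by omega)]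
    have ht : (n+1).toNat = n.toNat + 1 := by omega
    rw [ht, Finset.prod_range_succ, natcast_toNat (by omega : (0:ℤ) ≤ n)]
    ring

noncomputable def Tmap (l : ℂ) : (ℤ →₀ ℂ) →ₗ[ℂ] (ℤ →₀ ℂ) :=
  Finsupp.lsum ℂ (fun n => cfun l n • Finsupp.lsingle (-n - 1))

noncomputable def Smap (l : ℂ) : (ℤ →₀ ℂ) →ₗ[ℂ] (ℤ →₀ ℂ) :=
  Finsupp.lsum ℂ (fun m => (cfun l (-m - 1))⁻¹ • Finsupp.lsingle (-m - 1))

lemma Tmap_single (l : ℂ) (n : ℤ) (a : ℂ) :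
    Tmap l (Finsupp.single n a) = Finsupp.single (-n - 1) (cfun l n * a) := by
  simp only [Tmap, Finsupp.lsum_single, LinearMap.smul_apply, Finsupp.lsingle_apply,
    Finsupp.smul_single, smul_eq_mul]

lemma Smap_single (l : ℂ) (m : ℤ) (a : ℂ) :
    Smap l (Finsupp.single m a) = Finsupp.single (-m - 1) ((cfun l (-m - 1))⁻¹ * a) := by
  simp only [Smap, Finsupp.lsum_single, LinearMap.smul_apply, Finsupp.lsingle_apply,
    Finsupp.smul_single, smul_eq_mul]

lemma weylD_single (l : ℂ) (n : ℤ) (a : ℂ) :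
    weylD l (Finsupp.single n a) = Finsupp.single (n - 1) ((l + n) * a) := by
  simp only [weylD, Finsupp.lsum_single, LinearMap.smul_apply, Finsupp.lsingle_apply,
    Finsupp.smul_single, smul_eq_mul]

lemma weylX_single (n : ℤ) (a : ℂ) :
    weylX (Finsupp.single n a) = Finsupp.single (n + 1) a := by
  simp only [weylX, Finsupp.lmapDomain_apply, Finsupp.mapDomain_single]

/-- For `λ ∉ ℤ`, the twist of `U(λ)` by the automorphism `σ₀` of `A₁` with
`σ₀(∂) = -x`, `σ₀(x) = ∂` is isomorphic to `U(-λ)`: there is a linear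
bijection `T` intertwining the twisted action (`x` acts by `∂ = weylD l`,
`∂` acts by `-x = -weylX`) with the standard action on `U(-λ)`. -/
theorem twist_U_iso (l : ℂ) (h : ∀ n : ℤ, l ≠ (n : ℂ)) :
    ∃ T : (ℤ →₀ ℂ) ≃ₗ[ℂ] (ℤ →₀ ℂ),
      (∀ v, T (weylD l v) = weylX (T v)) ∧
      (∀ v, T (-(weylX v)) = weylD (-l) (T v)) := by
  have hT1 : Smap l ∘ₗ Tmap l = LinearMap.id := by
    apply Finsupp.lhom_ext
    intro n a
    rw [LinearMap.comp_apply, Tmap_single, Smap_single, LinearMap.id_apply]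
    rw [show -(-n-1) - 1 = n by ring, ← mul_assoc,
      inv_mul_cancel₀ (cfun_ne_zero l h n), one_mul]
  have hT2 : Tmap l ∘ₗ Smap l = LinearMap.id := by
    apply Finsupp.lhom_ext
    intro m a
    rw [LinearMap.comp_apply, Smap_single, Tmap_single, LinearMap.id_apply]
    rw [show -(-m-1) - 1 = m by ring, ← mul_assoc,
      mul_inv_cancel₀ (cfun_ne_zero l h (-m-1)), one_mul]
  refine ⟨LinearEquiv.ofLinear (Tmap l) (Smap l) hT2 hT1, ?_, ?_⟩
  · have key : Tmap l ∘ₗ weylD l = weylX ∘ₗ Tmap l := by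
      apply Finsupp.lhom_ext
      intro n a
      rw [LinearMap.comp_apply, LinearMap.comp_apply, weylD_single, Tmap_single,
        Tmap_single, weylX_single]
      rw [show -(n-1) - 1 = -n - 1 + 1 by ring]
      congr 1
      have hs := cfun_succ l h (n - 1)
      rw [show n - 1 + 1 = n by ring] at hs
      push_cast at hs
      rw [hs]; ring
    intro v
    exact DFunLike.congr_fun key v
  · have key : Tmap l ∘ₗ (-weylX) = weylD (-l) ∘ₗ Tmap l := by
      apply Finsupp.lhom_ext
      intro n a
      rw [LinearMap.comp_apply, LinearMap.comp_apply, LinearMap.neg_apply,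
        weylX_single, map_neg, Tmap_single, Tmap_single, weylD_single]
      rw [show -(n+1) - 1 = -n - 1 - 1 by ring, ← Finsupp.single_neg]
      congr 1
      rw [cfun_succ l h n]
      push_cast
      ring
    intro v
    have := DFunLike.congr_fun key v
    simpa using this
end

section
/- For r₁, r₂, s₁, s₂ ∈ ℂ with s₁ + s₂ ≠ 0, the tensor product of gl(1|1) Verma modules decomposes as 𝒱_{r₁,s₁} ⊗ 𝒱_{r₂,s₂} ≅ 𝒱_{r₁+r₂, s₁+s₂} ⊕ 𝒱_{r₁+r₂-1, s₁+s₂}. -/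
open TensorProduct

noncomputable section

/-- Actions on the Verma module `𝒱_{r,s}` of `gl(1|1)`, basis `v = e₀` (even),
`w = Ψ⁻v = e₁` (odd). -/
def vermaN (r : ℂ) : (Fin 2 → ℂ) →ₗ[ℂ] (Fin 2 → ℂ) :=
  Matrix.toLin' !![r, 0; 0, r - 1]

def vermaE (s : ℂ) : (Fin 2 → ℂ) →ₗ[ℂ] (Fin 2 → ℂ) :=
  Matrix.toLin' !![s, 0; 0, s]

def vermaPp (s : ℂ) : (Fin 2 → ℂ) →ₗ[ℂ] (Fin 2 → ℂ) :=
  Matrix.toLin' !![0, s; 0, 0]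

def vermaPm : (Fin 2 → ℂ) →ₗ[ℂ] (Fin 2 → ℂ) :=
  Matrix.toLin' !![(0 : ℂ), 0; 1, 0]

/-- The parity (sign) operator `(-1)^{|u|}` on `𝒱_{r,s}`: `v ↦ v`, `w ↦ -w`. -/
def vermaSign : (Fin 2 → ℂ) →ₗ[ℂ] (Fin 2 → ℂ) :=
  Matrix.toLin' !![(1 : ℂ), 0; 0, -1]

/-- Graded tensor action of an even element: `x·(u⊗v) = (xu)⊗v + u⊗(xv)`. -/
def evenOp (f g : (Fin 2 → ℂ) →ₗ[ℂ] (Fin 2 → ℂ)) :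
    ((Fin 2 → ℂ) ⊗[ℂ] (Fin 2 → ℂ)) →ₗ[ℂ] ((Fin 2 → ℂ) ⊗[ℂ] (Fin 2 → ℂ)) :=
  TensorProduct.map f LinearMap.id + TensorProduct.map LinearMap.id g

/-- Graded tensor action of an odd element:
`x·(u⊗v) = (xu)⊗v + (-1)^{|u|} u⊗(xv)`. -/
def oddOp (f g : (Fin 2 → ℂ) →ₗ[ℂ] (Fin 2 → ℂ)) :
    ((Fin 2 → ℂ) ⊗[ℂ] (Fin 2 → ℂ)) →ₗ[ℂ] ((Fin 2 → ℂ) ⊗[ℂ] (Fin 2 → ℂ)) :=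
  TensorProduct.map f LinearMap.id + TensorProduct.map vermaSign g


namespace VermaAux

/-- Basis vectors of `Fin 2 → ℂ`. -/
def ee : Fin 2 → (Fin 2 → ℂ) := fun i => Pi.single i 1

/-- The forward intertwiner, on pure tensors. -/
def Tfwd (s₁ s₂ : ℂ) :
    ((Fin 2 → ℂ) ⊗[ℂ] (Fin 2 → ℂ)) →ₗ[ℂ] ((Fin 2 → ℂ) × (Fin 2 → ℂ)) :=
  TensorProduct.lift <| LinearMap.mk₂ ℂ
    (fun u x => (![u 0 * x 0, (s₂ * (u 0 * x 1) + s₁ * (u 1 * x 0)) / (s₁ + s₂)],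
                 ![(u 0 * x 1 - u 1 * x 0) / (s₁ + s₂), u 1 * x 1 / (s₁ + s₂)]))
    (by intro u u' x; refine Prod.ext ?_ ?_ <;> funext i <;> fin_cases i <;>
        simp <;> ring)
    (by intro c u x; refine Prod.ext ?_ ?_ <;> funext i <;> fin_cases i <;>
        simp <;> ring)
    (by intro u x x'; refine Prod.ext ?_ ?_ <;> funext i <;> fin_cases i <;>
        simp <;> ring)
    (by intro c u x; refine Prod.ext ?_ ?_ <;> funext i <;> fin_cases i <;>
        simp <;> ring)

@[simp] lemma Tfwd_tmul (s₁ s₂ : ℂ) (u x : Fin 2 → ℂ) :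
    Tfwd s₁ s₂ (u ⊗ₜ x)
      = (![u 0 * x 0, (s₂ * (u 0 * x 1) + s₁ * (u 1 * x 0)) / (s₁ + s₂)],
         ![(u 0 * x 1 - u 1 * x 0) / (s₁ + s₂), u 1 * x 1 / (s₁ + s₂)]) := rfl

/-- The backward intertwiner. -/
def Tbwd (s₁ s₂ : ℂ) :
    ((Fin 2 → ℂ) × (Fin 2 → ℂ)) →ₗ[ℂ] ((Fin 2 → ℂ) ⊗[ℂ] (Fin 2 → ℂ)) :=
  LinearMap.coprod
    ((LinearMap.proj (0 : Fin 2)).smulRight (ee 0 ⊗ₜ ee 0)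
      + (LinearMap.proj (1 : Fin 2)).smulRight (ee 0 ⊗ₜ ee 1 + ee 1 ⊗ₜ ee 0))
    ((LinearMap.proj (0 : Fin 2)).smulRight (s₁ • ee 0 ⊗ₜ ee 1 - s₂ • ee 1 ⊗ₜ ee 0)
      + (LinearMap.proj (1 : Fin 2)).smulRight ((s₁ + s₂) • ee 1 ⊗ₜ[ℂ] ee 1))

lemma Tbwd_apply (s₁ s₂ : ℂ) (p q : Fin 2 → ℂ) :
    Tbwd s₁ s₂ (p, q)
      = p 0 • ee 0 ⊗ₜ ee 0 + p 1 • (ee 0 ⊗ₜ ee 1 + ee 1 ⊗ₜ ee 0)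
        + (q 0 • (s₁ • ee 0 ⊗ₜ ee 1 - s₂ • ee 1 ⊗ₜ ee 0)
            + q 1 • (s₁ + s₂) • ee 1 ⊗ₜ[ℂ] ee 1) := by
  simp [Tbwd]

lemma decomp (u : Fin 2 → ℂ) : u = u 0 • ee 0 + u 1 • ee 1 := by
  funext i; fin_cases i <;> simp [ee]

lemma right_inv (s₁ s₂ : ℂ) (h : s₁ + s₂ ≠ 0) :
    (Tfwd s₁ s₂) ∘ₗ (Tbwd s₁ s₂) = LinearMap.id := by
  apply LinearMap.ext
  rintro ⟨p, q⟩
  rw [LinearMap.comp_apply, Tbwd_apply]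
  simp only [map_add, map_smul, map_sub, Tfwd_tmul]
  refine Prod.ext ?_ ?_ <;> funext i <;> fin_cases i <;>
    simp [ee, Pi.single_apply] <;> field_simp <;> ring

lemma left_inv (s₁ s₂ : ℂ) (h : s₁ + s₂ ≠ 0) :
    (Tbwd s₁ s₂) ∘ₗ (Tfwd s₁ s₂) = LinearMap.id := by
  apply TensorProduct.ext'
  intro u x
  rw [LinearMap.comp_apply, LinearMap.id_apply, Tfwd_tmul, Tbwd_apply]
  conv_rhs => rw [decomp u, decomp x]
  simp only [tmul_add, add_tmul, smul_tmul, tmul_smul]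
  simp only [Matrix.cons_val_zero, Matrix.cons_val_one, Matrix.head_cons]
  match_scalars <;> field_simp <;> ring

lemma vermaN_apply (r : ℂ) (u : Fin 2 → ℂ) : vermaN r u = ![r * u 0, (r - 1) * u 1] := by
  funext i; fin_cases i <;> simp [vermaN, Matrix.mulVec, dotProduct, Fin.sum_univ_two]

lemma vermaE_apply (s : ℂ) (u : Fin 2 → ℂ) : vermaE s u = ![s * u 0, s * u 1] := by
  funext i; fin_cases i <;> simp [vermaE, Matrix.mulVec, dotProduct, Fin.sum_univ_two]

lemma vermaPp_apply (s : ℂ) (u : Fin 2 → ℂ) : vermaPp s u = ![s * u 1, 0] := by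
  funext i; fin_cases i <;> simp [vermaPp, Matrix.mulVec, dotProduct, Fin.sum_univ_two]

lemma vermaPm_apply (u : Fin 2 → ℂ) : vermaPm u = ![0, u 0] := by
  funext i; fin_cases i <;> simp [vermaPm, Matrix.mulVec, dotProduct, Fin.sum_univ_two]

lemma vermaSign_apply (u : Fin 2 → ℂ) : vermaSign u = ![u 0, -u 1] := by
  funext i; fin_cases i <;> simp [vermaSign, Matrix.mulVec, dotProduct, Fin.sum_univ_two]

lemma keyN (r₁ r₂ s₁ s₂ : ℂ) (h : s₁ + s₂ ≠ 0) :
    Tfwd s₁ s₂ ∘ₗ evenOp (vermaN r₁) (vermaN r₂)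
      = (LinearMap.prodMap (vermaN (r₁ + r₂)) (vermaN (r₁ + r₂ - 1))) ∘ₗ Tfwd s₁ s₂ := by
  apply TensorProduct.ext'
  intro u x
  simp only [LinearMap.comp_apply, evenOp, LinearMap.add_apply, TensorProduct.map_tmul,
    LinearMap.id_apply, map_add, Tfwd_tmul, LinearMap.prodMap_apply, vermaN_apply]
  refine Prod.ext ?_ ?_ <;> funext i <;> fin_cases i <;>
    ((try simp); (try field_simp); (try ring))

lemma keyE (s₁ s₂ : ℂ) (h : s₁ + s₂ ≠ 0) :
    Tfwd s₁ s₂ ∘ₗ evenOp (vermaE s₁) (vermaE s₂)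
      = (LinearMap.prodMap (vermaE (s₁ + s₂)) (vermaE (s₁ + s₂))) ∘ₗ Tfwd s₁ s₂ := by
  apply TensorProduct.ext'
  intro u x
  simp only [LinearMap.comp_apply, evenOp, LinearMap.add_apply, TensorProduct.map_tmul,
    LinearMap.id_apply, map_add, Tfwd_tmul, LinearMap.prodMap_apply, vermaE_apply]
  refine Prod.ext ?_ ?_ <;> funext i <;> fin_cases i <;>
    ((try simp); (try field_simp); (try ring))

lemma keyPp (s₁ s₂ : ℂ) (h : s₁ + s₂ ≠ 0) :
    Tfwd s₁ s₂ ∘ₗ oddOp (vermaPp s₁) (vermaPp s₂)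
      = (LinearMap.prodMap (vermaPp (s₁ + s₂)) (vermaPp (s₁ + s₂))) ∘ₗ Tfwd s₁ s₂ := by
  apply TensorProduct.ext'
  intro u x
  simp only [LinearMap.comp_apply, oddOp, LinearMap.add_apply, TensorProduct.map_tmul,
    LinearMap.id_apply, map_add, Tfwd_tmul, LinearMap.prodMap_apply, vermaPp_apply,
    vermaSign_apply]
  refine Prod.ext ?_ ?_ <;> funext i <;> fin_cases i <;>
    ((try simp); (try field_simp); (try ring))

lemma keyPm (s₁ s₂ : ℂ) (h : s₁ + s₂ ≠ 0) :
    Tfwd s₁ s₂ ∘ₗ oddOp vermaPm vermaPm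
      = (LinearMap.prodMap vermaPm vermaPm) ∘ₗ Tfwd s₁ s₂ := by
  apply TensorProduct.ext'
  intro u x
  simp only [LinearMap.comp_apply, oddOp, LinearMap.add_apply, TensorProduct.map_tmul,
    LinearMap.id_apply, map_add, Tfwd_tmul, LinearMap.prodMap_apply, vermaPm_apply,
    vermaSign_apply]
  refine Prod.ext ?_ ?_ <;> funext i <;> fin_cases i <;>
    ((try simp); (try field_simp); (try ring))

end VermaAux

open VermaAux

/-- `𝒱_{r₁,s₁} ⊗ 𝒱_{r₂,s₂} ≅ 𝒱_{r₁+r₂,s₁+s₂} ⊕ 𝒱_{r₁+r₂-1,s₁+s₂}` as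
`gl(1|1)`-modules, when `s₁ + s₂ ≠ 0`. -/
theorem verma_tensor_decomposition (r₁ r₂ s₁ s₂ : ℂ) (h : s₁ + s₂ ≠ 0) :
    ∃ T : ((Fin 2 → ℂ) ⊗[ℂ] (Fin 2 → ℂ)) ≃ₗ[ℂ] ((Fin 2 → ℂ) × (Fin 2 → ℂ)),
      ∀ u : (Fin 2 → ℂ) ⊗[ℂ] (Fin 2 → ℂ),
        T (evenOp (vermaN r₁) (vermaN r₂) u)
            = LinearMap.prodMap (vermaN (r₁ + r₂)) (vermaN (r₁ + r₂ - 1)) (T u) ∧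
        T (evenOp (vermaE s₁) (vermaE s₂) u)
            = LinearMap.prodMap (vermaE (s₁ + s₂)) (vermaE (s₁ + s₂)) (T u) ∧
        T (oddOp (vermaPp s₁) (vermaPp s₂) u)
            = LinearMap.prodMap (vermaPp (s₁ + s₂)) (vermaPp (s₁ + s₂)) (T u) ∧
        T (oddOp vermaPm vermaPm u)
            = LinearMap.prodMap vermaPm vermaPm (T u) := by
  refine ⟨LinearEquiv.ofLinear (Tfwd s₁ s₂) (Tbwd s₁ s₂) (right_inv s₁ s₂ h) (left_inv s₁ s₂ h),
    fun u => ⟨?_, ?_, ?_, ?_⟩⟩ <;>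
    simp only [LinearEquiv.ofLinear_apply]
  · exact LinearMap.congr_fun (keyN r₁ r₂ s₁ s₂ h) u
  · exact LinearMap.congr_fun (keyE s₁ s₂ h) u
  · exact LinearMap.congr_fun (keyPp s₁ s₂ h) u
  · exact LinearMap.congr_fun (keyPm s₁ s₂ h) u

end
end
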